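/- Let X be a geodesic metric space and U ⊆ X a closed C-contracting subset. Then U is σ-quasiconvex for some function σ depending only on C: for all q ≥ 1, Q ≥ 0, every (q,Q)-quasi-geodesic with both endpoints in U is contained in the R-neighborhood of U, where R = σ(q,Q) depends only on q, Q, C. -/
import Mathlib


open Metric Set Filter

/-- The nearest-point projection set of `x` to `U`. -/
def projSet {X : Type*} [MetricSpace X] (x : X) (U : Set X) : Set X :=
  {y ∈ U | dist x y = Metric.infDist x U}

/-- `γ` is a geodesic parametrized (by arclength) on the interval `[a,b]`. -/
def IsGeodesicOn {X : Type*} [MetricSpace X] (γ : ℝ → X) (a b : ℝ) : Prop :=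
  ∀ s ∈ Set.Icc a b, ∀ t ∈ Set.Icc a b, dist (γ s) (γ t) = |s - t|

/-- `γ` is a geodesic ray parametrized on `[0,∞)`. -/
def IsGeodesicRay {X : Type*} [MetricSpace X] (γ : ℝ → X) : Prop :=
  ∀ s t : ℝ, 0 ≤ s → 0 ≤ t → dist (γ s) (γ t) = |s - t|

/-- `U` is a `C`-contracting subset: any geodesic at distance `≥ C` from `U`
projects to a set of diameter `≤ C`. -/
def IsContracting {X : Type*} [MetricSpace X] (C : ℝ) (U : Set X) : Prop :=
  ∀ (γ : ℝ → X) (a b : ℝ), a ≤ b → IsGeodesicOn γ a b →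
    (∀ s ∈ Set.Icc a b, C ≤ Metric.infDist (γ s) U) →
    Metric.diam (⋃ s ∈ Set.Icc a b, projSet (γ s) U) ≤ C

/-- `X` is a geodesic metric space. -/
def IsGeodesicSpace (X : Type*) [MetricSpace X] : Prop :=
  ∀ x y : X, ∃ γ : ℝ → X, γ 0 = x ∧ γ (dist x y) = y ∧ IsGeodesicOn γ 0 (dist x y)

/-- `γ` is a `(q,Q)`-quasi-geodesic parametrized on `[a,b]`. -/
def IsQuasiGeodesicOn {X : Type*} [MetricSpace X] (γ : ℝ → X) (q Q a b : ℝ) : Prop :=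
  Continuous γ ∧ ∀ s ∈ Set.Icc a b, ∀ t ∈ Set.Icc a b,
    |s - t| / q - Q ≤ dist (γ s) (γ t) ∧ dist (γ s) (γ t) ≤ q * |s - t| + Q

lemma contracting_mono' {X : Type*} [MetricSpace X] {U : Set X} {C C' : ℝ}
    (h : C ≤ C') (hc : IsContracting C U) : IsContracting C' U :=
  fun g a b hab hg hd =>
    le_trans (hc g a b hab hg (fun s hs => le_trans h (hd s hs))) h

lemma projSet_nonempty' {X : Type*} [MetricSpace X] [ProperSpace X] {U : Set X}
    (hU : IsClosed U) (hne : U.Nonempty) (x : X) : ∃ p, p ∈ projSet x U := by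
  obtain ⟨y, hy, hdy⟩ := hU.exists_infDist_eq_dist hne x
  exact ⟨y, hy, hdy.symm⟩

lemma proj_jump' {X : Type*} [MetricSpace X] [ProperSpace X]
    (hgeo : IsGeodesicSpace X) {U : Set X}
    {C' lam : ℝ} (hC' : 0 ≤ C') (hcon : IsContracting C' U)
    {x y : X} (hx : lam ≤ Metric.infDist x U) (hy : lam ≤ Metric.infDist y U)
    (hxy : dist x y ≤ lam - C')
    {p p' : X} (hp : p ∈ projSet x U) (hp' : p' ∈ projSet y U) :
    dist p p' ≤ C' := by
  obtain ⟨g, hg0, hgd, hgeod⟩ := hgeo x y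
  set d := dist x y with hd
  have hd0 : 0 ≤ d := dist_nonneg
  have hlamC : C' ≤ lam := by linarith
  -- distance from points of g to U
  have hdepth : ∀ r ∈ Set.Icc (0:ℝ) d, C' ≤ Metric.infDist (g r) U := by
    intro r hr
    have h1 : dist x (g r) = r := by
      have := hgeod 0 ⟨le_rfl, hd0⟩ r hr
      rw [hg0] at this
      rw [this, abs_sub_comm, sub_zero, abs_of_nonneg hr.1]
    have h2 : dist y (g r) = d - r := by
      have := hgeod d ⟨hd0, le_rfl⟩ r hr
      rw [hgd] at this
      rw [this, abs_of_nonneg (by linarith [hr.2])]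
    have e1 : lam - r ≤ Metric.infDist (g r) U := by
      have := Metric.infDist_le_infDist_add_dist (s := U) (x := x) (y := g r)
      rw [h1] at this
      linarith
    have e2 : lam - (d - r) ≤ Metric.infDist (g r) U := by
      have := Metric.infDist_le_infDist_add_dist (s := U) (x := y) (y := g r)
      rw [h2] at this
      linarith
    rcases le_total r (d / 2) with h | h
    · linarith
    · linarith
  have hdiam := hcon g 0 d hd0 hgeod hdepth
  set A := ⋃ r ∈ Set.Icc (0:ℝ) d, projSet (g r) U with hA
  have hbdd : Bornology.IsBounded A := by
    apply (Metric.isBounded_closedBall (x := x) (r := Metric.infDist x U + 2 * d)).subset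
    intro z hz
    simp only [hA, Set.mem_iUnion, exists_prop] at hz
    obtain ⟨r, hr, hzU, hzd⟩ := hz
    have h1 : dist x (g r) = r := by
      have := hgeod 0 ⟨le_rfl, hd0⟩ r hr
      rw [hg0] at this
      rw [this, abs_sub_comm, sub_zero, abs_of_nonneg hr.1]
    have h3 : Metric.infDist (g r) U ≤ Metric.infDist x U + r := by
      have := Metric.infDist_le_infDist_add_dist (s := U) (x := g r) (y := x)
      rw [dist_comm, h1] at this
      linarith
    have : dist x z ≤ dist x (g r) + dist (g r) z := dist_triangle _ _ _
    rw [h1, hzd] at this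
    simp only [Metric.mem_closedBall]
    rw [dist_comm]
    have := hr.2
    linarith
  have hpA : p ∈ A := by
    simp only [hA, Set.mem_iUnion, exists_prop]
    exact ⟨0, ⟨le_rfl, hd0⟩, by rw [hg0]; exact hp⟩
  have hp'A : p' ∈ A := by
    simp only [hA, Set.mem_iUnion, exists_prop]
    exact ⟨d, ⟨hd0, le_rfl⟩, by rw [hgd]; exact hp'⟩
  exact le_trans (Metric.dist_le_diam_of_mem hbdd hpA hp'A) hdiam

set_option maxHeartbeats 1000000 in
/-- A `C`-contracting subset is `σ`-quasiconvex for a function `σ` depending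
only on `C`: every `(q,Q)`-quasi-geodesic with endpoints in `U` stays in the
`σ(q,Q)`-neighborhood of `U`. -/
theorem stmt7 (C : ℝ) (hC : 0 ≤ C) :
    ∃ σ : ℝ → ℝ → ℝ,
      ∀ (X : Type) [MetricSpace X] [ProperSpace X],
        IsGeodesicSpace X →
        ∀ (U : Set X), IsClosed U → IsContracting C U →
        ∀ q Q : ℝ, 1 ≤ q → 0 ≤ Q →
        ∀ (γ : ℝ → X) (a b : ℝ), a ≤ b →
          IsQuasiGeodesicOn γ q Q a b → γ a ∈ U → γ b ∈ U →
          ∀ s ∈ Set.Icc a b, Metric.infDist (γ s) U ≤ σ q Q := by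
  refine ⟨fun q Q => (2*q^2*(C+1) + (C+1) + Q) + Q +
      q^2 * (2*(2*q^2*(C+1) + (C+1) + Q) + (C+1) + Q), ?_⟩
  intro X _ _ hgeo U hUc hcon q Q hq hQ γ a b hab hqg hga hgb s hs
  show Metric.infDist (γ s) U ≤ (2*q^2*(C+1) + (C+1) + Q) + Q +
      q^2 * (2*(2*q^2*(C+1) + (C+1) + Q) + (C+1) + Q)
  set C' : ℝ := C + 1 with hC'def
  have hC'1 : (1:ℝ) ≤ C' := by simp only [hC'def]; linarith
  have hC'0 : (0:ℝ) < C' := by linarith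
  have hq0 : (0:ℝ) < q := by linarith
  have hq2 : (1:ℝ) ≤ q^2 := by nlinarith [hq]
  have hcon' : IsContracting C' U := contracting_mono' (by linarith) hcon
  set L : ℝ := 2*q^2*C' + C' + Q with hLdef
  have h2q2C : (0:ℝ) ≤ 2*q^2*C' :=
    mul_nonneg (mul_nonneg (by norm_num) (sq_nonneg q)) hC'0.le
  have hL0 : 0 < L := by rw [hLdef]; linarith
  have hLC : C' ≤ L := by rw [hLdef]; linarith
  clear_value C' L
  by_contra hM
  push_neg at hM
  -- hM : L + Q + q^2*(2*L + C' + Q) < infDist (γ s) U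
  have hpos : (0:ℝ) ≤ q^2 * (2*L + C' + Q) :=
    mul_nonneg (sq_nonneg q) (by linarith)
  have hML : L + Q < Metric.infDist (γ s) U := by linarith
  have hML' : L < Metric.infDist (γ s) U := by linarith
  have hUne : U.Nonempty := ⟨γ a, hga⟩
  obtain ⟨hcont, hQG⟩ := hqg
  have hf : Continuous (fun t => Metric.infDist (γ t) U) :=
    (continuous_infDist_pt U).comp hcont
  have hfa : Metric.infDist (γ a) U = 0 := Metric.infDist_zero_of_mem hga
  have hfb : Metric.infDist (γ b) U = 0 := Metric.infDist_zero_of_mem hgb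
  -- the entry time u on the left
  set S1 : Set ℝ := Set.Icc a s ∩ {t | Metric.infDist (γ t) U ≤ L} with hS1def
  have hS1closed : IsClosed S1 :=
    isClosed_Icc.inter (isClosed_le hf continuous_const)
  have haS1 : a ∈ S1 := ⟨⟨le_rfl, hs.1⟩, by simp only [Set.mem_setOf_eq, hfa]; linarith⟩
  have hS1ne : S1.Nonempty := ⟨a, haS1⟩
  have hS1bdd : BddAbove S1 := ⟨s, fun t ht => ht.1.2⟩
  set u : ℝ := sSup S1 with hudef
  have huS1 : u ∈ S1 := hS1closed.csSup_mem hS1ne hS1bdd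
  have hau : a ≤ u := le_csSup hS1bdd haS1
  have hus : u ≤ s := huS1.1.2
  have hfu_le : Metric.infDist (γ u) U ≤ L := huS1.2
  have hgt1 : ∀ t, u < t → t ≤ s → L < Metric.infDist (γ t) U := by
    intro t h1 h2
    by_contra hle
    push_neg at hle
    exact absurd (le_csSup hS1bdd ⟨⟨le_trans hau h1.le, h2⟩, hle⟩) (not_le.2 h1)
  clear_value S1 u
  have hu_lt_s : u < s := by
    rcases lt_or_eq_of_le hus with h | h
    · exact h
    · exfalso; rw [h] at hfu_le; linarith
  have hfu : Metric.infDist (γ u) U = L := by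
    rcases lt_or_eq_of_le hfu_le with hlt | heq
    · exfalso
      have hev : {t | Metric.infDist (γ t) U < L} ∈ nhds u :=
        (isOpen_lt hf continuous_const).mem_nhds hlt
      rw [Metric.mem_nhds_iff] at hev
      obtain ⟨ε, hε, hball⟩ := hev
      set t : ℝ := min s (u + ε/2) with htdef
      have hut : u < t := lt_min hu_lt_s (by linarith)
      have hts : t ≤ s := min_le_left _ _
      have htb : t ∈ Metric.ball u ε := by
        rw [Metric.mem_ball, Real.dist_eq, abs_of_nonneg (by linarith)]
        have h2 : t ≤ u + ε/2 := min_le_right _ _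
        linarith
      exact absurd (hball htb) (not_lt.2 (hgt1 t hut hts).le)
    · exact heq
  -- the entry time v on the right
  set S2 : Set ℝ := Set.Icc s b ∩ {t | Metric.infDist (γ t) U ≤ L} with hS2def
  have hS2closed : IsClosed S2 :=
    isClosed_Icc.inter (isClosed_le hf continuous_const)
  have hbS2 : b ∈ S2 := ⟨⟨hs.2, le_rfl⟩, by simp only [Set.mem_setOf_eq, hfb]; linarith⟩
  have hS2ne : S2.Nonempty := ⟨b, hbS2⟩
  have hS2bdd : BddBelow S2 := ⟨s, fun t ht => ht.1.1⟩
  set v : ℝ := sInf S2 with hvdef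
  have hvS2 : v ∈ S2 := hS2closed.csInf_mem hS2ne hS2bdd
  have hsv : s ≤ v := hvS2.1.1
  have hvb : v ≤ b := csInf_le hS2bdd hbS2
  have hfv_le : Metric.infDist (γ v) U ≤ L := hvS2.2
  have hgt2 : ∀ t, s ≤ t → t < v → L < Metric.infDist (γ t) U := by
    intro t h1 h2
    by_contra hle
    push_neg at hle
    exact absurd (csInf_le hS2bdd ⟨⟨h1, le_trans h2.le hvb⟩, hle⟩) (not_le.2 h2)
  clear_value S2 v
  have hs_lt_v : s < v := by
    rcases lt_or_eq_of_le hsv with h | h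
    · exact h
    · exfalso; rw [← h] at hfv_le; linarith
  have hfv : Metric.infDist (γ v) U = L := by
    rcases lt_or_eq_of_le hfv_le with hlt | heq
    · exfalso
      have hev : {t | Metric.infDist (γ t) U < L} ∈ nhds v :=
        (isOpen_lt hf continuous_const).mem_nhds hlt
      rw [Metric.mem_nhds_iff] at hev
      obtain ⟨ε, hε, hball⟩ := hev
      set t : ℝ := max s (v - ε/2) with htdef
      have hvt : t < v := max_lt hs_lt_v (by linarith)
      have hts : s ≤ t := le_max_left _ _
      have htb : t ∈ Metric.ball v ε := by
        rw [Metric.mem_ball, Real.dist_eq, abs_of_nonpos (by linarith)]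
        have h2 : v - ε/2 ≤ t := le_max_right _ _
        linarith
      exact absurd (hball htb) (not_lt.2 (hgt2 t hts hvt).le)
    · exact heq
  -- depth at least L on [u, v]
  have hflow : ∀ t ∈ Set.Icc u v, L ≤ Metric.infDist (γ t) U := by
    intro t ht
    rcases le_total t s with h | h
    · rcases eq_or_lt_of_le ht.1 with he | hl
      · rw [← he]; exact hfu.ge
      · exact (hgt1 t hl h).le
    · rcases eq_or_lt_of_le ht.2 with he | hl
      · rw [he]; exact hfv.ge
      · exact (hgt2 t h hl).le
  have hIu : u ∈ Set.Icc a b := ⟨hau, hus.trans hs.2⟩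
  have hIv : v ∈ Set.Icc a b := ⟨hs.1.trans hsv, hvb⟩
  -- lower bound on v - u
  have h3u : Metric.infDist (γ s) U - L - Q ≤ q * (s - u) := by
    have h1 : Metric.infDist (γ s) U ≤ Metric.infDist (γ u) U + dist (γ s) (γ u) :=
      Metric.infDist_le_infDist_add_dist
    have h2 := (hQG s hs u hIu).2
    rw [abs_of_nonneg (by linarith : (0:ℝ) ≤ s - u)] at h2
    linarith
  have h3v : Metric.infDist (γ s) U - L - Q ≤ q * (v - s) := by
    have h1 : Metric.infDist (γ s) U ≤ Metric.infDist (γ v) U + dist (γ s) (γ v) :=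
      Metric.infDist_le_infDist_add_dist
    have h2 := (hQG s hs v hIv).2
    rw [abs_of_nonpos (by linarith : s - v ≤ (0:ℝ)), neg_sub] at h2
    linarith
  have h3 : 2 * (Metric.infDist (γ s) U - L - Q) ≤ q * (v - u) := by
    have e : q * (s - u) + q * (v - s) = q * (v - u) := by ring
    linarith
  have hT : (0:ℝ) < v - u := by
    rcases le_or_gt (v - u) 0 with h | h
    · exfalso
      have h9 : q * (v - u) ≤ 0 := mul_nonpos_of_nonneg_of_nonpos hq0.le h
      linarith
    · exact h
  -- the subdivision
  have hh0 : (0:ℝ) < 2*q*C' := by positivity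
  set n : ℕ := ⌈(v - u)/(2*q*C')⌉₊ with hndef
  have hn0 : 0 < n := Nat.ceil_pos.2 (div_pos hT hh0)
  have hn0' : (0:ℝ) < (n:ℝ) := by exact_mod_cast hn0
  have hTn : v - u ≤ (n:ℝ) * (2*q*C') := by
    have h1 := Nat.le_ceil ((v - u)/(2*q*C'))
    rw [div_le_iff₀ hh0] at h1
    exact h1
  have hnle : (n:ℝ) ≤ (v - u)/(2*q*C') + 1 :=
    (Nat.ceil_lt_add_one (div_pos hT hh0).le).le
  clear_value n
  set δ : ℝ := (v - u)/(n:ℝ) with hδdef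
  have hδ0 : 0 < δ := div_pos hT hn0'
  clear_value δ
  have hnδ : (n:ℝ) * δ = v - u := by
    rw [hδdef]; field_simp
  have hstep : δ ≤ 2*q*C' := by
    rw [hδdef, div_le_iff₀ hn0']
    have e : (n:ℝ) * (2*q*C') = 2*q*C' * (n:ℝ) := by ring
    linarith
  set w : ℕ → ℝ := fun i => u + (i:ℝ) * δ with hwdef
  clear_value w
  have hw0 : w 0 = u := by simp [hwdef]
  have hwn : w n = v := by simp only [hwdef]; rw [hnδ]; ring
  have hwmem : ∀ i : ℕ, i ≤ n → w i ∈ Set.Icc u v := by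
    intro i hi
    have hin : (i:ℝ) ≤ (n:ℝ) := by exact_mod_cast hi
    constructor
    · simp only [hwdef]
      have h9 : (0:ℝ) ≤ (i:ℝ) * δ := mul_nonneg (Nat.cast_nonneg i) hδ0.le
      linarith
    · simp only [hwdef]
      have h9 : (i:ℝ) * δ ≤ (n:ℝ) * δ := mul_le_mul_of_nonneg_right hin hδ0.le
      linarith
  have hwab : ∀ i : ℕ, i ≤ n → w i ∈ Set.Icc a b := fun i hi =>
    ⟨hau.trans (hwmem i hi).1, (hwmem i hi).2.trans hvb⟩
  -- chords are short
  have hchord : ∀ i : ℕ, i < n → dist (γ (w i)) (γ (w (i+1))) ≤ L - C' := by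
    intro i hi
    have h1 := (hQG (w i) (hwab i hi.le) (w (i+1)) (hwab (i+1) hi)).2
    have h2 : w i - w (i+1) = -δ := by simp only [hwdef]; push_cast; ring
    rw [h2, abs_neg, abs_of_nonneg hδ0.le] at h1
    have h4 : q * δ ≤ q * (2*q*C') := mul_le_mul_of_nonneg_left hstep hq0.le
    have h5 : q * (2*q*C') = 2*q^2*C' := by ring
    have h6 : L - C' = 2*q^2*C' + Q := by rw [hLdef]; ring
    linarith
  -- the chain of projections
  have hproj : ∀ i : ℕ, ∃ p, p ∈ projSet (γ (w i)) U := fun i =>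
    projSet_nonempty' hUc hUne _
  choose p hp using hproj
  have hjump : ∀ i : ℕ, i < n → dist (p i) (p (i+1)) ≤ C' := by
    intro i hi
    exact proj_jump' hgeo hC'0.le hcon' (hflow _ (hwmem i hi.le))
      (hflow _ (hwmem (i+1) hi)) (hchord i hi) (hp i) (hp (i+1))
  have hchain : dist (p 0) (p n) ≤ (n:ℝ) * C' := by
    calc dist (p 0) (p n) ≤ ∑ i ∈ Finset.range n, dist (p i) (p (i+1)) :=
          dist_le_range_sum_dist p n
    _ ≤ ∑ _i ∈ Finset.range n, C' :=
          Finset.sum_le_sum (fun i hi => hjump i (Finset.mem_range.1 hi))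
    _ = (n:ℝ) * C' := by rw [Finset.sum_const, Finset.card_range, nsmul_eq_mul]
  have hpu : dist (γ u) (p 0) = L := by
    have h1 := (hp 0).2
    rw [hw0] at h1
    rw [h1, hfu]
  have hpv : dist (p n) (γ v) = L := by
    have h1 := (hp n).2
    rw [hwn] at h1
    rw [dist_comm, h1, hfv]
  -- upper and lower bound for dist (γ u) (γ v)
  have hlow := (hQG u hIu v hIv).1
  rw [abs_sub_comm, abs_of_nonneg (by linarith : (0:ℝ) ≤ v - u)] at hlow
  have htri : dist (γ u) (γ v) ≤ dist (γ u) (p 0) + dist (p 0) (p n) + dist (p n) (γ v) :=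
    dist_triangle4 _ _ _ _
  have hmain : (v - u)/q - Q ≤ L + (n:ℝ) * C' + L := by
    rw [hpu, hpv] at htri
    linarith only [hlow, htri, hchain]
  -- bound n
  have he : (v - u)/(2*q*C') * C' = (v - u)/(2*q) := by
    rw [div_mul_eq_mul_div, mul_div_mul_right _ _ (ne_of_gt hC'0)]
  have hnC : (n:ℝ) * C' ≤ (v - u)/(2*q) + C' := by
    have h9 : (n:ℝ) * C' ≤ ((v - u)/(2*q*C') + 1) * C' :=
      mul_le_mul_of_nonneg_right hnle hC'0.le
    have e2 : ((v - u)/(2*q*C') + 1) * C' = (v - u)/(2*q*C') * C' + C' := by ring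
    linarith
  -- conclude
  have hdiv1 : (v - u)/q = (v - u) * q⁻¹ := div_eq_mul_inv _ _
  have hdiv2 : (v - u)/(2*q) = (v - u) * q⁻¹ / 2 := by
    rw [div_eq_mul_inv, div_eq_mul_inv, mul_inv]
    ring
  have hTbound : v - u ≤ 2*q*(2*L + C' + Q) := by
    have h1 : (v - u) * q⁻¹ / 2 ≤ 2*L + C' + Q := by
      rw [← hdiv2]
      have := hmain
      rw [hdiv1] at this
      linarith [hnC]
    have h2 : (v - u) * q⁻¹ * q = v - u := by
      field_simp
    have h9 : (v - u) * q⁻¹ / 2 * q ≤ (2*L + C' + Q) * q :=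
      mul_le_mul_of_nonneg_right h1 hq0.le
    have e3 : (v - u) * q⁻¹ / 2 * q = (v - u) * q⁻¹ * q / 2 := by ring
    have e4 : 2 * ((2*L + C' + Q) * q) = 2*q*(2*L + C' + Q) := by ring
    linarith only [h9, e3, h2, e4]
  have h5 : q * (v - u) ≤ q * (2*q*(2*L + C' + Q)) :=
    mul_le_mul_of_nonneg_left hTbound hq0.le
  have e5 : q * (2*q*(2*L + C' + Q)) = 2 * (q^2 * (2*L + C' + Q)) := by ring
  linarith
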